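/- Let P → Q be a Kummer-type homomorphism of fs monoids, let A be a commutative ring with a monoid homomorphism P → (A, ·). Consider the homomorphisms α : A → A ⊗_{Z[P]} Z[Q] and β₁, β₂ : A ⊗_{Z[P]} Z[Q] → A ⊗_{Z[P]} Z[Q ⊕ (Q^gp/P^gp)], where β₁ sends 1⊗a to 1⊗(a,1) and β₂ sends 1⊗a to 1⊗(a, a mod P^gp) for a ∈ Q. Then the sequence A → A ⊗_{Z[P]} Z[Q] ⇉ A ⊗_{Z[P]} Z[Q ⊕ (Q^gp/P^gp)] is exact, i.e., A is the equalizer of β₁ and β₂. -/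

import Mathlib

open TensorProduct

/-- `ι : P →* G` realizes `G` as the group hull (Grothendieck group) `P^gp` of `P`. -/
def IsGp {P G : Type} [CommMonoid P] [CommGroup G] (ι : P →* G) : Prop :=
  (∀ x : G, ∃ a b : P, x = ι a * (ι b)⁻¹) ∧
    (∀ a b : P, ι a = ι b ↔ ∃ c : P, a * c = b * c)

/-- `P` is saturated via `ι : P → P^gp`. -/
def IsSaturatedVia {P G : Type} [CommMonoid P] [CommGroup G] (ι : P →* G) : Prop :=
  Function.Injective ι ∧
    ∀ x : G, (∃ n : ℕ, 1 ≤ n ∧ x ^ n ∈ Set.range ι) → x ∈ Set.range ι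

/-- `P` is fs: finitely generated and saturated. -/
def IsFsVia {P G : Type} [CommMonoid P] [CommGroup G] (ι : P →* G) : Prop :=
  Monoid.FG P ∧ IsSaturatedVia ι

/-- `h : P → Q` is of Kummer type. -/
def IsKummer {P Q : Type} [CommMonoid P] [CommMonoid Q] (h : P →* Q) : Prop :=
  Function.Injective h ∧ ∀ a : Q, ∃ n : ℕ, 1 ≤ n ∧ a ^ n ∈ Set.range h

open scoped Classical in
noncomputable def tau0 {P Q : Type} [CommMonoid P] [CommMonoid Q] (h : P →* Q) :
    MonoidAlgebra ℤ Q →ₗ[ℤ] MonoidAlgebra ℤ P :=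
  (Finsupp.lsum ℤ fun q => LinearMap.toSpanSingleton ℤ (MonoidAlgebra ℤ P)
    (if hq : ∃ p, h p = q then MonoidAlgebra.single hq.choose 1 else 0)) ∘ₗ
    (MonoidAlgebra.coeffLinearEquiv ℤ).toLinearMap

open scoped Classical in
lemma tau0_single {P Q : Type} [CommMonoid P] [CommMonoid Q] (h : P →* Q) (q : Q) (n : ℤ) :
    tau0 h (MonoidAlgebra.single q n) =
      if hq : ∃ p, h p = q then MonoidAlgebra.single hq.choose n else 0 := by
  rw [tau0, LinearMap.comp_apply, LinearEquiv.coe_coe, MonoidAlgebra.coeffLinearEquiv_apply,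
    MonoidAlgebra.coeff_single]; erw [Finsupp.lsum_single, LinearMap.toSpanSingleton_apply]
  split_ifs with hq
  · simp [Finsupp.smul_single, smul_eq_mul]
  · simp

open scoped Classical in
noncomputable def pi0 (Q C : Type) [CommMonoid Q] [CommMonoid C] :
    MonoidAlgebra ℤ (Q × C) →ₗ[ℤ] MonoidAlgebra ℤ Q :=
  (Finsupp.lsum ℤ fun (qc : Q × C) => LinearMap.toSpanSingleton ℤ (MonoidAlgebra ℤ Q)
    (if qc.2 = 1 then MonoidAlgebra.single qc.1 1 else 0)) ∘ₗ
    (MonoidAlgebra.coeffLinearEquiv ℤ).toLinearMap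

open scoped Classical in
lemma pi0_single (Q C : Type) [CommMonoid Q] [CommMonoid C] (q : Q) (c : C) (n : ℤ) :
    pi0 Q C (MonoidAlgebra.single (q, c) n) =
      if c = 1 then MonoidAlgebra.single q n else 0 := by
  rw [pi0, LinearMap.comp_apply, LinearEquiv.coe_coe, MonoidAlgebra.coeffLinearEquiv_apply,
    MonoidAlgebra.coeff_single]; erw [Finsupp.lsum_single, LinearMap.toSpanSingleton_apply]
  split_ifs with hq
  · simp [Finsupp.smul_single, smul_eq_mul]
  · simp

lemma addhom_rsmul {P M N : Type} [CommMonoid P] [AddCommGroup M] [AddCommGroup N]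
    [Module (MonoidAlgebra ℤ P) M] [Module (MonoidAlgebra ℤ P) N] (L : M →+ N)
    (hL : ∀ (p : P) (m : M),
      L ((MonoidAlgebra.single p 1 : MonoidAlgebra ℤ P) • m)
        = (MonoidAlgebra.single p 1 : MonoidAlgebra ℤ P) • L m)
    (r : MonoidAlgebra ℤ P) (m : M) : L (r • m) = r • L m := by
  induction r using MonoidAlgebra.induction_on with
  | of p => simpa [MonoidAlgebra.of_apply] using hL p m
  | add f g hf hg => rw [add_smul, map_add, hf, hg, add_smul]
  | smul n f hf => rw [smul_assoc, map_zsmul, hf, ← smul_assoc]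

set_option maxHeartbeats 2000000

/-- Let `P → Q` be a Kummer-type homomorphism of fs monoids and `A` a commutative ring with a
monoid homomorphism `P → (A, ·)`.  Put `C = Q^gp/P^gp` (the cokernel of `P^gp → Q^gp`).
Consider `α : A → A ⊗_{Z[P]} Z[Q]`, `a ↦ a ⊗ 1`, and the homomorphisms
`β₁, β₂ : A ⊗_{Z[P]} Z[Q] → A ⊗_{Z[P]} Z[Q ⊕ C]` with `β₁(1 ⊗ a) = 1 ⊗ (a, 1)` and
`β₂(1 ⊗ a) = 1 ⊗ (a, a mod P^gp)` for `a ∈ Q`.  Then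
`A → A ⊗_{Z[P]} Z[Q] ⇉ A ⊗_{Z[P]} Z[Q ⊕ C]` is exact: `α` is injective and its image is the
equalizer of `β₁` and `β₂`. -/
theorem stmt_4 (P Q G G' : Type) [CommMonoid P] [CommMonoid Q] [CommGroup G] [CommGroup G']
    (ιP : P →* G) (ιQ : Q →* G') (hgpP : IsGp ιP) (hgpQ : IsGp ιQ)
    (hP : IsFsVia ιP) (hQ : IsFsVia ιQ)
    (h : P →* Q) (hK : IsKummer h)
    (g : G →* G') (hg : g.comp ιP = ιQ.comp h)
    (A : Type) [CommRing A] (φ : P →* A)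
    [Algebra (MonoidAlgebra ℤ P) A]
    (hA : ∀ p : P, algebraMap (MonoidAlgebra ℤ P) A (MonoidAlgebra.single p 1) = φ p)
    [Algebra (MonoidAlgebra ℤ P) (MonoidAlgebra ℤ Q)]
    (hPQ : ∀ p : P, algebraMap (MonoidAlgebra ℤ P) (MonoidAlgebra ℤ Q)
      (MonoidAlgebra.single p 1) = MonoidAlgebra.single (h p) 1)
    [Algebra (MonoidAlgebra ℤ P) (MonoidAlgebra ℤ (Q × (G' ⧸ g.range)))]
    (hPQC : ∀ p : P, algebraMap (MonoidAlgebra ℤ P) (MonoidAlgebra ℤ (Q × (G' ⧸ g.range)))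
      (MonoidAlgebra.single p 1) = MonoidAlgebra.single (h p, 1) 1)
    (β₁ β₂ : (A ⊗[MonoidAlgebra ℤ P] MonoidAlgebra ℤ Q) →+*
      (A ⊗[MonoidAlgebra ℤ P] MonoidAlgebra ℤ (Q × (G' ⧸ g.range))))
    (hβ : ∀ x : A, β₁ (x ⊗ₜ 1) = x ⊗ₜ 1 ∧ β₂ (x ⊗ₜ 1) = x ⊗ₜ 1)
    (hβ₁ : ∀ a : Q, β₁ (1 ⊗ₜ MonoidAlgebra.single a 1) =
      1 ⊗ₜ MonoidAlgebra.single (a, (1 : G' ⧸ g.range)) 1)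
    (hβ₂ : ∀ a : Q, β₂ (1 ⊗ₜ MonoidAlgebra.single a 1) =
      1 ⊗ₜ MonoidAlgebra.single (a, (QuotientGroup.mk (ιQ a) : G' ⧸ g.range)) 1) :
    Function.Injective
      (fun x : A => (x ⊗ₜ 1 : A ⊗[MonoidAlgebra ℤ P] MonoidAlgebra ℤ Q)) ∧
    Set.range (fun x : A => (x ⊗ₜ 1 : A ⊗[MonoidAlgebra ℤ P] MonoidAlgebra ℤ Q)) =
      {y | β₁ y = β₂ y} := by
  classical
  obtain ⟨hinjh, hKum⟩ := hK
  have hinjP : Function.Injective ιP := hP.2.1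
  have hsatP := hP.2.2
  have hinjQ : Function.Injective ιQ := hQ.2.1
  have hgPQ : ∀ p : P, g (ιP p) = ιQ (h p) := fun p => DFunLike.congr_fun hg p
  -- g is injective
  have hginj : Function.Injective g := by
    rw [injective_iff_map_eq_one]
    intro x hx
    obtain ⟨a, b, rfl⟩ := hgpP.1 x
    rw [map_mul, map_inv, hgPQ, hgPQ, mul_inv_eq_one] at hx
    rw [hinjh (hinjQ hx)]
    simp
  -- key: q is in the image of h iff its class in G'/g.range is trivial
  have K0 : ∀ q : Q, (QuotientGroup.mk (ιQ q) : G' ⧸ g.range) = 1 ↔ ∃ p, h p = q := by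
    intro q
    constructor
    · intro hq1
      rw [QuotientGroup.eq_one_iff] at hq1
      obtain ⟨x, hx⟩ := hq1
      obtain ⟨n, hn1, p, hp⟩ := hKum q
      have hxn : x ^ n = ιP p := by
        apply hginj
        rw [map_pow, hx, hgPQ, hp, map_pow]
      obtain ⟨p', hp'⟩ := hsatP x ⟨n, hn1, ⟨p, hxn.symm⟩⟩
      exact ⟨p', hinjQ (by rw [← hgPQ, hp']; exact hx)⟩
    · rintro ⟨p, rfl⟩
      rw [QuotientGroup.eq_one_iff]
      exact ⟨ιP p, hgPQ p⟩
  have K1 : ∀ (p : P) (q : Q), (∃ p', h p' = h p * q) ↔ ∃ p', h p' = q := by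
    intro p q
    rw [← K0, ← K0, map_mul, QuotientGroup.mk_mul, (K0 (h p)).2 ⟨p, rfl⟩, one_mul]
  -- τ : ℤ[Q] → ℤ[P], R-linear
  have hτ : ∀ (p : P) (f : MonoidAlgebra ℤ Q),
      tau0 h ((MonoidAlgebra.single p 1 : MonoidAlgebra ℤ P) • f)
        = (MonoidAlgebra.single p 1 : MonoidAlgebra ℤ P) • tau0 h f := by
    intro p f
    rw [Algebra.smul_def, hPQ, smul_eq_mul]
    induction f using MonoidAlgebra.induction_linear with
    | zero => simp
    | add f f' hf hf' => rw [mul_add, map_add, hf, hf', map_add, mul_add]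
    | single q n =>
      rw [MonoidAlgebra.single_mul_single, one_mul, tau0_single, tau0_single]
      by_cases hq : ∃ p', h p' = q
      · have hpq : ∃ p', h p' = h p * q := (K1 p q).2 hq
        rw [dif_pos hq, dif_pos hpq,
          show hpq.choose = p * hq.choose from
            hinjh (by rw [hpq.choose_spec, map_mul, hq.choose_spec]),
          MonoidAlgebra.single_mul_single, one_mul]
      · rw [dif_neg hq, dif_neg (fun c => hq ((K1 p q).1 c)), mul_zero]
  let τ : MonoidAlgebra ℤ Q →ₗ[MonoidAlgebra ℤ P] MonoidAlgebra ℤ P :=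
    { toFun := tau0 h, map_add' := map_add _,
      map_smul' := fun r f => addhom_rsmul (tau0 h).toAddMonoidHom (fun p m => hτ p m) r f }
  -- π₁ : ℤ[Q × C] → ℤ[Q], R-linear
  have hπ : ∀ (p : P) (z : MonoidAlgebra ℤ (Q × (G' ⧸ g.range))),
      pi0 Q (G' ⧸ g.range) ((MonoidAlgebra.single p 1 : MonoidAlgebra ℤ P) • z)
        = (MonoidAlgebra.single p 1 : MonoidAlgebra ℤ P) • pi0 Q (G' ⧸ g.range) z := by
    intro p z
    rw [Algebra.smul_def, Algebra.smul_def, hPQC, hPQ]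
    induction z using MonoidAlgebra.induction_linear with
    | zero => simp
    | add f f' hf hf' => rw [mul_add, map_add, hf, hf', map_add, mul_add]
    | single qc n =>
      obtain ⟨q, c⟩ := qc
      rw [MonoidAlgebra.single_mul_single, one_mul, Prod.mk_mul_mk, one_mul,
        pi0_single, pi0_single]
      split_ifs with hc
      · rw [MonoidAlgebra.single_mul_single, one_mul]
      · rw [mul_zero]
  let π₁ : MonoidAlgebra ℤ (Q × (G' ⧸ g.range)) →ₗ[MonoidAlgebra ℤ P] MonoidAlgebra ℤ Q :=
    { toFun := pi0 Q (G' ⧸ g.range), map_add' := map_add _,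
      map_smul' := fun r f =>
        addhom_rsmul (pi0 Q (G' ⧸ g.range)).toAddMonoidHom (fun p m => hπ p m) r f }
  -- β on generators
  have Cβ₁ : ∀ (a : A) (q : Q),
      β₁ (a ⊗ₜ MonoidAlgebra.single q 1) = a ⊗ₜ MonoidAlgebra.single (q, (1 : G' ⧸ g.range)) 1 := by
    intro a q
    have h1 : (a ⊗ₜ MonoidAlgebra.single q 1 : A ⊗[MonoidAlgebra ℤ P] MonoidAlgebra ℤ Q)
        = (a ⊗ₜ 1) * (1 ⊗ₜ MonoidAlgebra.single q 1) := by
      rw [Algebra.TensorProduct.tmul_mul_tmul, mul_one, one_mul]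
    rw [h1, map_mul, (hβ a).1, hβ₁, Algebra.TensorProduct.tmul_mul_tmul, mul_one, one_mul]
  have Cβ₂ : ∀ (a : A) (q : Q),
      β₂ (a ⊗ₜ MonoidAlgebra.single q 1)
        = a ⊗ₜ MonoidAlgebra.single (q, (QuotientGroup.mk (ιQ q) : G' ⧸ g.range)) 1 := by
    intro a q
    have h1 : (a ⊗ₜ MonoidAlgebra.single q 1 : A ⊗[MonoidAlgebra ℤ P] MonoidAlgebra ℤ Q)
        = (a ⊗ₜ 1) * (1 ⊗ₜ MonoidAlgebra.single q 1) := by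
      rw [Algebra.TensorProduct.tmul_mul_tmul, mul_one, one_mul]
    rw [h1, map_mul, (hβ a).2, hβ₂, Algebra.TensorProduct.tmul_mul_tmul, mul_one, one_mul]
  -- first projection identity
  have E1 : ∀ y : A ⊗[MonoidAlgebra ℤ P] MonoidAlgebra ℤ Q,
      LinearMap.lTensor A π₁ (β₁ y) = y := by
    intro y
    induction y using TensorProduct.induction_on with
    | zero => simp
    | add y z hy hz => rw [map_add, map_add, hy, hz]
    | tmul a f =>
      induction f using MonoidAlgebra.induction_linear with
      | zero => rw [tmul_zero, map_zero, map_zero]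
      | add f f' hf hf' => rw [tmul_add, map_add, map_add, hf, hf']
      | single q n =>
        have hs : (MonoidAlgebra.single q n : MonoidAlgebra ℤ Q) = n • MonoidAlgebra.single q 1 := by
          rw [MonoidAlgebra.smul_single, smul_eq_mul, mul_one]
        have hts : (a ⊗ₜ (n • MonoidAlgebra.single q 1) : A ⊗[MonoidAlgebra ℤ P] MonoidAlgebra ℤ Q)
            = n • (a ⊗ₜ MonoidAlgebra.single q 1) :=
          map_zsmul (TensorProduct.mk (MonoidAlgebra ℤ P) A (MonoidAlgebra ℤ Q) a) n _
        rw [hs, hts, map_zsmul, map_zsmul, Cβ₁, LinearMap.lTensor_tmul]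
        congr 1
        show a ⊗ₜ pi0 Q (G' ⧸ g.range) (MonoidAlgebra.single (q, 1) 1) = _
        rw [pi0_single, if_pos rfl]
  -- second projection computes the image-graded part
  have E2 : ∀ y : A ⊗[MonoidAlgebra ℤ P] MonoidAlgebra ℤ Q,
      LinearMap.lTensor A π₁ (β₂ y)
        = LinearMap.lTensor A ((Algebra.linearMap (MonoidAlgebra ℤ P) (MonoidAlgebra ℤ Q)).comp τ) y := by
    intro y
    induction y using TensorProduct.induction_on with
    | zero => simp
    | add y z hy hz => rw [map_add, map_add, map_add, hy, hz]
    | tmul a f =>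
      induction f using MonoidAlgebra.induction_linear with
      | zero => rw [tmul_zero, map_zero, map_zero, map_zero]
      | add f f' hf hf' => rw [tmul_add, map_add, map_add, map_add, hf, hf']
      | single q n =>
        have hs : (MonoidAlgebra.single q n : MonoidAlgebra ℤ Q) = n • MonoidAlgebra.single q 1 := by
          rw [MonoidAlgebra.smul_single, smul_eq_mul, mul_one]
        have hts : (a ⊗ₜ (n • MonoidAlgebra.single q 1) : A ⊗[MonoidAlgebra ℤ P] MonoidAlgebra ℤ Q)
            = n • (a ⊗ₜ MonoidAlgebra.single q 1) :=
          map_zsmul (TensorProduct.mk (MonoidAlgebra ℤ P) A (MonoidAlgebra ℤ Q) a) n _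
        rw [hs, hts, map_zsmul, map_zsmul, map_zsmul, Cβ₂,
          LinearMap.lTensor_tmul, LinearMap.lTensor_tmul]
        congr 1
        show a ⊗ₜ pi0 Q (G' ⧸ g.range) (MonoidAlgebra.single (q, (QuotientGroup.mk (ιQ q) : G' ⧸ g.range)) 1)
          = a ⊗ₜ (algebraMap (MonoidAlgebra ℤ P) (MonoidAlgebra ℤ Q) (tau0 h (MonoidAlgebra.single q 1)))
        rw [pi0_single, tau0_single]
        by_cases hq : ∃ p', h p' = q
        · rw [if_pos ((K0 q).2 hq), dif_pos hq, hPQ, hq.choose_spec]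
        · rw [if_neg (fun c => hq ((K0 q).1 c)), dif_neg hq, map_zero, tmul_zero]
  -- retraction
  set E : A ⊗[MonoidAlgebra ℤ P] MonoidAlgebra ℤ Q → A :=
    fun y => TensorProduct.rid (MonoidAlgebra ℤ P) A (LinearMap.lTensor A τ y) with hE
  have E3 : ∀ y : A ⊗[MonoidAlgebra ℤ P] MonoidAlgebra ℤ Q,
      LinearMap.lTensor A ((Algebra.linearMap (MonoidAlgebra ℤ P) (MonoidAlgebra ℤ Q)).comp τ) y
        = (E y) ⊗ₜ 1 := by
    intro y
    induction y using TensorProduct.induction_on with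
    | zero => simp [hE]
    | add y z hy hz =>
      rw [map_add, hy, hz, hE]
      simp only []
      rw [map_add, map_add, add_tmul]
    | tmul a f =>
      rw [LinearMap.lTensor_tmul, LinearMap.comp_apply, Algebra.linearMap_apply,
        Algebra.algebraMap_eq_smul_one, hE]
      simp only []
      rw [LinearMap.lTensor_tmul, TensorProduct.rid_tmul, ← TensorProduct.smul_tmul']
      exact (TensorProduct.mk (MonoidAlgebra ℤ P) A (MonoidAlgebra ℤ Q) a).map_smul (τ f) 1
  -- E is a retraction of x ↦ x ⊗ 1
  have E4 : ∀ x : A, E (x ⊗ₜ 1) = x := by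
    intro x
    rw [hE]
    simp only []
    rw [LinearMap.lTensor_tmul]
    have h1 : τ 1 = 1 := by
      show tau0 h (MonoidAlgebra.single 1 1) = 1
      rw [tau0_single, dif_pos ⟨1, map_one h⟩,
        show (⟨1, map_one h⟩ : ∃ p, h p = 1).choose = 1 from
          hinjh (by rw [(⟨1, map_one h⟩ : ∃ p, h p = 1).choose_spec, map_one]),
        MonoidAlgebra.one_def]
    rw [show τ (1 : MonoidAlgebra ℤ Q) = 1 from h1, TensorProduct.rid_tmul, one_smul]
  constructor
  · intro x y hxy
    calc x = E (x ⊗ₜ 1) := (E4 x).symm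
      _ = E (y ⊗ₜ 1) := by rw [show (x ⊗ₜ 1 : A ⊗[MonoidAlgebra ℤ P] MonoidAlgebra ℤ Q) = y ⊗ₜ 1 from hxy]
      _ = y := E4 y
  · ext y
    simp only [Set.mem_range, Set.mem_setOf_eq]
    constructor
    · rintro ⟨x, rfl⟩
      rw [(hβ x).1, (hβ x).2]
    · intro hy
      refine ⟨E y, ?_⟩
      have h1 : LinearMap.lTensor A π₁ (β₁ y) = y := E1 y
      rw [hy, E2 y, E3 y] at h1
      exact h1
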